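/- Let a, r, δ be positive integers with a = r + δ - 1, δ ≥ 4, r ≥ 5, and let τ, τ' be integers coprime to a with 1 ≤ τ, τ' < a. If {i·τ mod a : 1 ≤ i ≤ δ-1} ⊆ {i·τ' mod a : 1 ≤ i ≤ δ}, then τ = τ'. -/

import Mathlib

lemma key_lemma (a δ c : ℕ) (hδ : 4 ≤ δ) (hda : δ + 4 ≤ a) (hclt : c < a)
    (hinj : ∀ i j, i < a → j < a → (i * c) % a = (j * c) % a → i = j)
    (hmul : ∀ i, 1 ≤ i → i ≤ δ - 1 → 1 ≤ (i * c) % a ∧ (i * c) % a ≤ δ) : c = 1 := by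
  classical
  set M : Finset ℕ := (Finset.Icc 1 (δ - 1)).image (fun i => (i * c) % a) with hM
  have hMsub : M ⊆ Finset.Icc 1 δ := by
    intro y hy
    simp only [hM, Finset.mem_image, Finset.mem_Icc] at hy ⊢
    obtain ⟨i, ⟨hi1, hi2⟩, rfl⟩ := hy
    exact hmul i hi1 hi2
  have hMcard : M.card = δ - 1 := by
    rw [hM, Finset.card_image_of_injOn, Nat.card_Icc]
    · omega
    · intro i hi j hj hij
      simp only [Finset.coe_Icc, Set.mem_Icc] at hi hj
      exact hinj i j (by omega) (by omega) hij
  have hDcard : ((Finset.Icc 1 δ) \ M).card = 1 := by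
    rw [Finset.card_sdiff_of_subset hMsub, Nat.card_Icc, hMcard]; omega
  obtain ⟨x, hDx⟩ := Finset.card_eq_one.mp hDcard
  have hxmem : x ∈ Finset.Icc 1 δ ∧ x ∉ M := by
    have : x ∈ (Finset.Icc 1 δ) \ M := hDx ▸ Finset.mem_singleton_self x
    exact Finset.mem_sdiff.mp this
  have hmem : ∀ y, 1 ≤ y → y ≤ δ → y ≠ x → y ∈ M := by
    intro y hy1 hy2 hne
    by_contra h
    have : y ∈ (Finset.Icc 1 δ) \ M :=
      Finset.mem_sdiff.mpr ⟨Finset.mem_Icc.mpr ⟨hy1, hy2⟩, h⟩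
    rw [hDx] at this
    exact hne (Finset.mem_singleton.mp this)
  have hB : ∀ y, y ∈ M → (y + c) % a ∉ M → y = (δ - 1) * c % a := by
    intro y hy hbad
    simp only [hM, Finset.mem_image, Finset.mem_Icc] at hy
    obtain ⟨i, ⟨hi1, hi2⟩, rfl⟩ := hy
    rcases eq_or_lt_of_le hi2 with h | h
    · rw [h]
    · exfalso
      apply hbad
      have e : ((i * c) % a + c) % a = ((i + 1) * c) % a := by
        rw [Nat.mod_add_mod, add_mul, one_mul]
      rw [e, hM]
      exact Finset.mem_image.mpr ⟨i + 1, Finset.mem_Icc.mpr ⟨by omega, by omega⟩, rfl⟩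
  have hcM : 1 ≤ c ∧ c ≤ δ := by
    have := hmul 1 le_rfl (by omega)
    rwa [one_mul, Nat.mod_eq_of_lt hclt] at this
  by_contra hc1
  have hc2 : 2 ≤ c := by omega
  have hbad : ∀ y, 1 ≤ y → y ≤ δ → y ≠ x → δ + 1 ≤ y + c → y + c < a →
      y = (δ - 1) * c % a := by
    intro y hy1 hy2 hne hy3 hy4
    apply hB y (hmem y hy1 hy2 hne)
    intro hmem'
    have := Finset.mem_Icc.mp (hMsub hmem')
    rw [Nat.mod_eq_of_lt hy4] at this
    omega
  by_cases hca : a ≤ c + δ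
  · by_cases hx1 : x = a - c - 1
    · have e1 := hbad (a - c - 2) (by omega) (by omega) (by omega) (by omega) (by omega)
      have e2 := hbad (a - c - 3) (by omega) (by omega) (by omega) (by omega) (by omega)
      omega
    · by_cases hx2 : x = a - c - 2
      · have e1 := hbad (a - c - 1) (by omega) (by omega) (by omega) (by omega) (by omega)
        have e2 := hbad (a - c - 3) (by omega) (by omega) (by omega) (by omega) (by omega)
        omega
      · have e1 := hbad (a - c - 1) (by omega) (by omega) (by omega) (by omega) (by omega)
        have e2 := hbad (a - c - 2) (by omega) (by omega) (by omega) (by omega) (by omega)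
        omega
  · by_cases hc3 : 3 ≤ c
    · by_cases hx1 : x = δ
      · have e1 := hbad (δ - 1) (by omega) (by omega) (by omega) (by omega) (by omega)
        have e2 := hbad (δ - 2) (by omega) (by omega) (by omega) (by omega) (by omega)
        omega
      · by_cases hx2 : x = δ - 1
        · have e1 := hbad δ (by omega) (by omega) (by omega) (by omega) (by omega)
          have e2 := hbad (δ - 2) (by omega) (by omega) (by omega) (by omega) (by omega)
          omega
        · have e1 := hbad δ (by omega) (by omega) (by omega) (by omega) (by omega)
          have e2 := hbad (δ - 1) (by omega) (by omega) (by omega) (by omega) (by omega)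
          omega
    · have hc2' : c = 2 := by omega
      by_cases hx1 : x = δ
      · have e1 := hbad (δ - 1) (by omega) (by omega) (by omega) (by omega) (by omega)
        have e2 : δ - 2 = (δ - 1) * c % a := by
          apply hB (δ - 2) (hmem (δ - 2) (by omega) (by omega) (by omega))
          have : (δ - 2 + c) % a = x := by
            rw [Nat.mod_eq_of_lt (by omega)]; omega
          rw [this]; exact hxmem.2
        omega
      · by_cases hx2 : x = δ - 1
        · have e1 := hbad δ (by omega) (by omega) (by omega) (by omega) (by omega)
          have e2 : δ - 3 = (δ - 1) * c % a := by
            apply hB (δ - 3) (hmem (δ - 3) (by omega) (by omega) (by omega))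
            have : (δ - 3 + c) % a = x := by
              rw [Nat.mod_eq_of_lt (by omega)]; omega
            rw [this]; exact hxmem.2
          omega
        · have e1 := hbad δ (by omega) (by omega) (by omega) (by omega) (by omega)
          have e2 := hbad (δ - 1) (by omega) (by omega) (by omega) (by omega) (by omega)
          omega

theorem stmt_2 (a r δ τ τ' : ℕ) (ha : a = r + δ - 1) (hδ : 4 ≤ δ) (hr : 5 ≤ r)
    (hτ : Nat.gcd τ a = 1) (hτ' : Nat.gcd τ' a = 1)
    (h1 : 1 ≤ τ) (h2 : τ < a) (h3 : 1 ≤ τ') (h4 : τ' < a)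
    (hsub : ∀ i, 1 ≤ i → i ≤ δ - 1 → ∃ j, 1 ≤ j ∧ j ≤ δ ∧ (i * τ) % a = (j * τ') % a) :
    τ = τ' := by
  have hda : δ + 4 ≤ a := by omega
  have ha1 : 1 < a := by omega
  obtain ⟨m, -, hm⟩ := Nat.exists_mul_mod_eq_one_of_coprime hτ' ha1
  have hmc : Nat.Coprime m a := by
    have hdvd : Nat.gcd m a ∣ 1 := by
      rw [← hm]
      exact (Nat.dvd_mod_iff (Nat.gcd_dvd_right m a)).mpr
        (Dvd.dvd.mul_left (Nat.gcd_dvd_left m a) τ')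
    exact Nat.eq_one_of_dvd_one hdvd
  set c : ℕ := (τ * m) % a with hc
  have hclt : c < a := Nat.mod_lt _ (by omega)
  have hcmod : c ≡ τ * m [MOD a] := Nat.mod_modEq (τ * m) a
  have hτm : τ' * m ≡ 1 [MOD a] := by
    unfold Nat.ModEq
    rw [hm, Nat.mod_eq_of_lt ha1]
  have hinj : ∀ i j, i < a → j < a → (i * c) % a = (j * c) % a → i = j := by
    intro i j hi hj hij
    have h5 : i * (τ * m) ≡ j * (τ * m) [MOD a] :=
      ((Nat.ModEq.mul_left i hcmod).symm.trans (hij : i * c ≡ j * c [MOD a])).trans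
        (Nat.ModEq.mul_left j hcmod)
    rw [← mul_assoc, ← mul_assoc] at h5
    have h6 : i * τ ≡ j * τ [MOD a] :=
      Nat.ModEq.cancel_right_of_coprime hmc.symm h5
    have h7 : i ≡ j [MOD a] :=
      Nat.ModEq.cancel_right_of_coprime (by rwa [Nat.gcd_comm] at hτ) h6
    unfold Nat.ModEq at h7
    rwa [Nat.mod_eq_of_lt hi, Nat.mod_eq_of_lt hj] at h7
  have hmul : ∀ i, 1 ≤ i → i ≤ δ - 1 → 1 ≤ (i * c) % a ∧ (i * c) % a ≤ δ := by
    intro i hi1 hi2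
    obtain ⟨j, hj1, hj2, hje⟩ := hsub i hi1 hi2
    have h5 : i * c ≡ j [MOD a] := by
      calc i * c ≡ i * (τ * m) [MOD a] := Nat.ModEq.mul_left i hcmod
        _ = (i * τ) * m := by ring
        _ ≡ (j * τ') * m [MOD a] := Nat.ModEq.mul_right m (hje : i * τ ≡ j * τ' [MOD a])
        _ = j * (τ' * m) := by ring
        _ ≡ j * 1 [MOD a] := Nat.ModEq.mul_left j hτm
        _ = j := by ring
    have : (i * c) % a = j := by
      unfold Nat.ModEq at h5
      rwa [Nat.mod_eq_of_lt (show j < a by omega)] at h5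
    omega
  have hc1 : c = 1 := key_lemma a δ c hδ hda hclt hinj hmul
  have h8 : τ * m ≡ τ' * m [MOD a] := by
    have : τ * m ≡ 1 [MOD a] := by
      unfold Nat.ModEq
      rw [show τ * m % a = c from rfl, hc1, Nat.mod_eq_of_lt ha1]
    exact this.trans hτm.symm
  have h9 : τ ≡ τ' [MOD a] :=
    Nat.ModEq.cancel_right_of_coprime hmc.symm h8
  unfold Nat.ModEq at h9
  rwa [Nat.mod_eq_of_lt h2, Nat.mod_eq_of_lt h4] at h9
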